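/- Let V be a 2p+k dimensional vector space with null basis {e₁,…,e_{2p}, e_{2p+1},…,e_{2p+k}} and a Lie bracket whose structure constants C^c_{ab} are supported on boost weights (b₁,…,b_p) satisfying x₁b₁ + … + x_pb_p ≤ −1 for some positive reals x₁ ≥ x₂ ≥ … ≥ x_p > 0. Then the subspaces N₊ = span{e₂,e₄,…,e_{2p}} and N₊ ⊕ H with H = span{e_{2p+1},…,e_{2p+k}} are subalgebras: [N₊,N₊] ⊆ N₊, [N₊,H] ⊆ N₊, and [H,H] ⊆ N₊. -/

import Mathlib

/-- Let `V` be `(2p+k)`-dimensional with null basis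
`e₁,…,e_{2p},e_{2p+1},…,e_{2p+k}` (0-indexed: `e a` for `a : Fin (2p+k)`; the index
`a = 2i` carries `i`-th boost weight `+1`, `a = 2i+1` carries `−1`, and `a ≥ 2p` carries
weight `0`). Suppose the bracket `μ` has structure constants `C c a b`
(`μ(e a, e b) = Σ_c C c a b • e c`) supported on boost weights
`wt(c) − wt(a) − wt(b)` satisfying `x₁b₁ + … + x_p b_p ≤ −1` for positive reals
`x₁ ≥ … ≥ x_p > 0`. Then with `N₊ = span{e₂,e₄,…,e_{2p}}` (odd 0-indices `< 2p`) and
`H = span{e_{2p+1},…}`, one has `[N₊,N₊] ⊆ N₊`, `[N₊,H] ⊆ N₊`, `[H,H] ⊆ N₊`;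
in particular `N₊` and `N₊ ⊕ H` are subalgebras. -/
theorem null_cone_plus_distribution_subalgebra
    (p k : ℕ) (hp : 0 < p)
    (V : Type*) [AddCommGroup V] [Module ℝ V]
    (e : Module.Basis (Fin (2 * p + k)) ℝ V)
    (μ : V →ₗ[ℝ] V →ₗ[ℝ] V)
    (halt : ∀ x y : V, μ x y = - μ y x)
    (C : Fin (2 * p + k) → Fin (2 * p + k) → Fin (2 * p + k) → ℝ)
    (hμ : ∀ a b : Fin (2 * p + k), μ (e a) (e b) = ∑ c, C c a b • e c)
    (x : Fin p → ℝ) (hxpos : ∀ i, 0 < x i)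
    (hxmono : ∀ i j : Fin p, i ≤ j → x j ≤ x i)
    (wt : Fin (2 * p + k) → Fin p → ℤ)
    (hwt : ∀ a : Fin (2 * p + k), ∀ i : Fin p,
      wt a i = if (a : ℕ) = 2 * (i : ℕ) then 1
        else if (a : ℕ) = 2 * (i : ℕ) + 1 then -1 else 0)
    (hsupp : ∀ c a b : Fin (2 * p + k), C c a b ≠ 0 →
      ∑ i, x i * ((wt c i : ℝ) - (wt a i : ℝ) - (wt b i : ℝ)) ≤ -1) :
    (∀ a b : Fin (2 * p + k),
      ((a : ℕ) % 2 = 1 ∧ (a : ℕ) < 2 * p) → ((b : ℕ) % 2 = 1 ∧ (b : ℕ) < 2 * p) →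
      μ (e a) (e b) ∈
        Submodule.span ℝ (e '' {c : Fin (2 * p + k) | (c : ℕ) % 2 = 1 ∧ (c : ℕ) < 2 * p})) ∧
    (∀ a b : Fin (2 * p + k),
      ((a : ℕ) % 2 = 1 ∧ (a : ℕ) < 2 * p) → 2 * p ≤ (b : ℕ) →
      μ (e a) (e b) ∈
        Submodule.span ℝ (e '' {c : Fin (2 * p + k) | (c : ℕ) % 2 = 1 ∧ (c : ℕ) < 2 * p})) ∧
    (∀ a b : Fin (2 * p + k),
      2 * p ≤ (a : ℕ) → 2 * p ≤ (b : ℕ) →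
      μ (e a) (e b) ∈
        Submodule.span ℝ (e '' {c : Fin (2 * p + k) | (c : ℕ) % 2 = 1 ∧ (c : ℕ) < 2 * p})) := by

  -- weights of "minus" and "spatial" indices are nonpositive
  have hle : ∀ a : Fin (2 * p + k),
      (((a : ℕ) % 2 = 1 ∧ (a : ℕ) < 2 * p) ∨ 2 * p ≤ (a : ℕ)) →
      ∀ i : Fin p, wt a i ≤ 0 := by
    intro a ha i
    rw [hwt]
    split_ifs with h1 h2
    · rcases ha with ⟨hodd, _⟩ | hge
      · omega
      · have : (i : ℕ) < p := i.isLt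
        omega
    · norm_num
    · norm_num
  -- weights of indices outside N₊ are nonnegative
  have hge : ∀ c : Fin (2 * p + k),
      ¬ ((c : ℕ) % 2 = 1 ∧ (c : ℕ) < 2 * p) → ∀ i : Fin p, 0 ≤ wt c i := by
    intro c hc i
    rw [hwt]
    split_ifs with h1 h2
    · norm_num
    · exfalso
      have : (i : ℕ) < p := i.isLt
      omega
    · norm_num
  have key : ∀ a b : Fin (2 * p + k),
      (((a : ℕ) % 2 = 1 ∧ (a : ℕ) < 2 * p) ∨ 2 * p ≤ (a : ℕ)) →
      (((b : ℕ) % 2 = 1 ∧ (b : ℕ) < 2 * p) ∨ 2 * p ≤ (b : ℕ)) →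
      μ (e a) (e b) ∈
        Submodule.span ℝ (e '' {c : Fin (2 * p + k) | (c : ℕ) % 2 = 1 ∧ (c : ℕ) < 2 * p}) := by
    intro a b ha hb
    rw [hμ]
    apply Submodule.sum_mem
    intro c _
    by_cases hc : C c a b = 0
    · simp [hc]
    · refine Submodule.smul_mem _ _ (Submodule.subset_span ⟨c, ?_, rfl⟩)
      by_contra hcn
      have hsum := hsupp c a b hc
      have hnn : (0:ℝ) ≤ ∑ i, x i * ((wt c i : ℝ) - (wt a i : ℝ) - (wt b i : ℝ)) := by
        apply Finset.sum_nonneg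
        intro i _
        have h1 : wt a i ≤ 0 := hle a ha i
        have h2 : wt b i ≤ 0 := hle b hb i
        have h3 : 0 ≤ wt c i := hge c hcn i
        have hx := (hxpos i).le
        have : (0:ℝ) ≤ (wt c i : ℝ) - (wt a i : ℝ) - (wt b i : ℝ) := by
          have g1 : (wt a i : ℝ) ≤ 0 := by exact_mod_cast h1
          have g2 : (wt b i : ℝ) ≤ 0 := by exact_mod_cast h2
          have g3 : (0:ℝ) ≤ (wt c i : ℝ) := by exact_mod_cast h3
          linarith
        positivity
      linarith
  exact ⟨fun a b ha hb => key a b (Or.inl ha) (Or.inl hb),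
    fun a b ha hb => key a b (Or.inl ha) (Or.inr hb),
    fun a b ha hb => key a b (Or.inr ha) (Or.inr hb)⟩
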